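/- Let f_1, …, f_T : ℝⁿ → ℝ be differentiable, bounded in absolute value by M, and β-smooth (with f_t ≡ 0 for t ≤ 0), and let 1 ≤ w ≤ T. On a probability space, let random iterates be generated by x_1 = 0 and x_{t+1} = x_t − (1/β) ĝ_t, where each ĝ_t is a square-integrable random vector satisfying E[ĝ_t | x_t] = ∇F_{t,w}(x_t) and E[‖ĝ_t − ∇F_{t,w}(x_t)‖² | x_t] ≤ σ²/w almost surely (as arises from averaging w independent unbiased gradient estimates of variance σ² each). Then the expected w-local regret (with K = ℝⁿ, so the projected gradient equals the gradient) satisfies E[ Σ_{t=1}^T ‖∇F_{t,w}(x_t)‖² ] ≤ (8βM + σ²) · T / w. -/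

import Mathlib

open RealInnerProductSpace

/- Euclidean (nearest-point) projection onto a set `K`.  For a nonempty closed
convex set in a complete inner product space this is the usual orthogonal
projection onto `K`. -/
open Classical in
noncomputable def projOn {E : Type*} [NormedAddCommGroup E] [InnerProductSpace ℝ E]
    (K : Set E) (u : E) : E :=
  if h : ∃ v, v ∈ K ∧ ∀ w ∈ K, ‖u - v‖ ≤ ‖u - w‖ then h.choose else u

/- The `(K, η)`-projected gradient of `f` at `x`:
`∇_{K,η} f(x) = (1/η) (x − Π_K[x − η ∇f(x)])`. -/
noncomputable def projGrad {E : Type*} [NormedAddCommGroup E] [InnerProductSpace ℝ E]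
    [CompleteSpace E] (K : Set E) (η : ℝ) (f : E → ℝ) (x : E) : E :=
  (1 / η) • (x - projOn K (x - η • gradient f x))

/- The sliding-window time average `F_{t,w}(x) = (1/w) ∑_{i=0}^{w-1} f_{t-i}(x)`,
where natural-number subtraction together with `f 0 = 0` encodes the convention
that `f_t ≡ 0` for `t ≤ 0`. -/
noncomputable def Favg {E : Type*} (f : ℕ → E → ℝ) (w t : ℕ) (x : E) : ℝ :=
  (1 / (w : ℝ)) * ∑ i ∈ Finset.range w, f (t - i) x

open MeasureTheory
open MeasureTheory

section aux
variable {E : Type*} [NormedAddCommGroup E] [InnerProductSpace ℝ E] [CompleteSpace E]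

lemma inner_gradient_eq (φ : E → ℝ) (z v : E) :
    ⟪gradient φ z, v⟫ = fderiv ℝ φ z v := by
  simp [gradient, InnerProductSpace.toDual_symm_apply]

lemma descent_lemma (φ : E → ℝ) (L : ℝ)
    (hdiff : Differentiable ℝ φ)
    (hsm : ∀ a b, ‖gradient φ a - gradient φ b‖ ≤ L * ‖a - b‖) (x y : E) :
    φ y ≤ φ x + ⟪gradient φ x, y - x⟫ + L / 2 * ‖y - x‖ ^ 2 := by
  set v := y - x with hv
  set ψ : ℝ → ℝ := fun s => φ (x + s • v) - s * ⟪gradient φ x, v⟫ - L * s ^ 2 / 2 * ‖v‖ ^ 2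
    with hψdef
  have hψ : ∀ s : ℝ, HasDerivAt ψ
      (⟪gradient φ (x + s • v), v⟫ - ⟪gradient φ x, v⟫ - L * s * ‖v‖ ^ 2) s := by
    intro s
    have hγ : HasDerivAt (fun s : ℝ => x + s • v) v s := by
      simpa using (hasDerivAt_id s).smul_const v |>.const_add x
    have h1 : HasDerivAt (fun s : ℝ => φ (x + s • v)) (fderiv ℝ φ (x + s • v) v) s :=
      (hdiff (x + s • v)).hasFDerivAt.comp_hasDerivAt s hγ
    have h2 : HasDerivAt (fun s : ℝ => s * ⟪gradient φ x, v⟫) ⟪gradient φ x, v⟫ s := by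
      simpa using (hasDerivAt_id s).mul_const ⟪gradient φ x, v⟫
    have h3 : HasDerivAt (fun s : ℝ => L * s ^ 2 / 2 * ‖v‖ ^ 2) (L * s * ‖v‖ ^ 2) s := by
      have : HasDerivAt (fun s : ℝ => s ^ 2) (2 * s) s := by
        simpa using hasDerivAt_pow 2 s
      have := ((this.const_mul L).div_const 2).mul_const (‖v‖ ^ 2)
      rw [show L * s * ‖v‖ ^ 2 = L * (2 * s) / 2 * ‖v‖ ^ 2 by ring]; exact this
    have := (h1.sub h2).sub h3
    rw [← inner_gradient_eq] at this
    exact this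
  have hmono : AntitoneOn ψ (Set.Icc (0:ℝ) 1) := by
    apply antitoneOn_of_deriv_nonpos (convex_Icc 0 1)
    · exact fun s _ => (hψ s).continuousAt.continuousWithinAt
    · exact fun s _ => ((hψ s).differentiableAt).differentiableWithinAt
    · intro s hs
      rw [interior_Icc] at hs
      rw [(hψ s).deriv]
      have h1 : ⟪gradient φ (x + s • v), v⟫ - ⟪gradient φ x, v⟫
          = ⟪gradient φ (x + s • v) - gradient φ x, v⟫ := by
        rw [inner_sub_left]
      have h2 : ⟪gradient φ (x + s • v) - gradient φ x, v⟫ ≤ L * s * ‖v‖ ^ 2 := by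
        calc ⟪gradient φ (x + s • v) - gradient φ x, v⟫
            ≤ ‖gradient φ (x + s • v) - gradient φ x‖ * ‖v‖ := real_inner_le_norm _ _
          _ ≤ (L * ‖(x + s • v) - x‖) * ‖v‖ := by
              apply mul_le_mul_of_nonneg_right (hsm _ _) (norm_nonneg _)
          _ = L * s * ‖v‖ ^ 2 := by
              rw [add_sub_cancel_left, norm_smul, Real.norm_eq_abs,
                abs_of_pos hs.1]
              ring
      linarith [h1 ▸ h2]
  have key := hmono (Set.mem_Icc.2 ⟨le_refl 0, zero_le_one⟩)
    (Set.mem_Icc.2 ⟨zero_le_one, le_refl 1⟩) zero_le_one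
  have h0 : ψ 0 = φ x := by simp [hψdef]
  have h1 : ψ 1 = φ y - ⟪gradient φ x, v⟫ - L / 2 * ‖v‖ ^ 2 := by
    have hxy : x + v = y := by rw [hv]; abel
    simp only [hψdef, one_pow, mul_one, one_smul, hxy]
    ring
  rw [h0, h1] at key
  linarith
end aux

section favg
variable {E : Type*} [NormedAddCommGroup E] [InnerProductSpace ℝ E] [CompleteSpace E]

lemma Favg_diff (f : ℕ → E → ℝ) (w t : ℕ) (hd : ∀ s, Differentiable ℝ (f s)) :
    Differentiable ℝ (Favg f w t) := by
  unfold Favg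
  exact ((Differentiable.fun_sum (fun i _ => hd (t - i)))).const_mul _

lemma Favg_gradient (f : ℕ → E → ℝ) (w t : ℕ) (hd : ∀ s, Differentiable ℝ (f s)) (x : E) :
    gradient (Favg f w t) x
      = (1 / (w:ℝ)) • ∑ i ∈ Finset.range w, gradient (f (t - i)) x := by
  have hfd : fderiv ℝ (Favg f w t) x
      = (1 / (w:ℝ)) • ∑ i ∈ Finset.range w, fderiv ℝ (f (t - i)) x := by
    unfold Favg
    rw [fderiv_const_mul (Differentiable.fun_sum (fun i _ => hd (t - i))).differentiableAt]
    rw [fderiv_fun_sum (fun i _ => (hd (t - i)).differentiableAt)]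
  unfold gradient
  rw [hfd, _root_.map_smul, map_sum]

lemma Favg_smooth (f : ℕ → E → ℝ) (w t : ℕ) (hw : 1 ≤ w) (β : ℝ)
    (hd : ∀ s, Differentiable ℝ (f s))
    (hsm : ∀ s a b, ‖gradient (f s) a - gradient (f s) b‖ ≤ β * ‖a - b‖) (a b : E) :
    ‖gradient (Favg f w t) a - gradient (Favg f w t) b‖ ≤ β * ‖a - b‖ := by
  rw [Favg_gradient f w t hd, Favg_gradient f w t hd, ← smul_sub, ← Finset.sum_sub_distrib]
  rw [norm_smul]
  have h1 : ‖∑ i ∈ Finset.range w, (gradient (f (t - i)) a - gradient (f (t - i)) b)‖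
      ≤ ∑ i ∈ Finset.range w, (β * ‖a - b‖) := by
    refine (norm_sum_le _ _).trans (Finset.sum_le_sum fun i _ => hsm _ _ _)
  rw [Finset.sum_const, Finset.card_range, nsmul_eq_mul] at h1
  have hw0 : (0:ℝ) < w := by exact_mod_cast hw
  calc ‖(1 / (w:ℝ))‖ * ‖∑ i ∈ Finset.range w, (gradient (f (t - i)) a - gradient (f (t - i)) b)‖
      ≤ (1 / (w:ℝ)) * (w * (β * ‖a - b‖)) := by
        apply mul_le_mul _ h1 (norm_nonneg _) (by positivity)
        rw [Real.norm_eq_abs, abs_of_pos (by positivity)]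
    _ = β * ‖a - b‖ := by field_simp
  
lemma Favg_bdd (f : ℕ → E → ℝ) (w t : ℕ) (hw : 1 ≤ w) (M : ℝ)
    (hb : ∀ s z, |f s z| ≤ M) (z : E) : |Favg f w t z| ≤ M := by
  unfold Favg
  have hw0 : (0:ℝ) < w := by exact_mod_cast hw
  rw [abs_mul, abs_of_pos (by positivity : (0:ℝ) < 1 / w)]
  calc (1 / (w:ℝ)) * |∑ i ∈ Finset.range w, f (t - i) z|
      ≤ (1 / (w:ℝ)) * ∑ i ∈ Finset.range w, M := by
        apply mul_le_mul_of_nonneg_left _ (by positivity)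
        exact (Finset.abs_sum_le_sum_abs _ _).trans (Finset.sum_le_sum fun i _ => hb _ _)
    _ = M := by rw [Finset.sum_const, Finset.card_range, nsmul_eq_mul]; field_simp

lemma Favg_succ_sub (f : ℕ → E → ℝ) (w t : ℕ) (hw : 1 ≤ w) (ht : 1 ≤ t) (z : E) :
    Favg f w (t + 1) z - Favg f w t z = (1 / (w:ℝ)) * (f (t + 1) z - f (t + 1 - w) z) := by
  unfold Favg
  rw [← mul_sub]
  congr 1
  have h1 : ∑ i ∈ Finset.range w, f (t + 1 - i) z
      = f (t + 1) z + ∑ i ∈ Finset.range (w - 1), f (t - i) z := by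
    obtain ⟨w', rfl⟩ : ∃ w', w = w' + 1 := ⟨w - 1, (Nat.succ_pred_eq_of_pos hw).symm⟩
    rw [Finset.sum_range_succ']
    simp only [Nat.add_sub_cancel]
    rw [add_comm]
    congr 1
    apply Finset.sum_congr rfl
    intro i _
    congr 1
    omega
  have h2 : ∑ i ∈ Finset.range w, f (t - i) z
      = (∑ i ∈ Finset.range (w - 1), f (t - i) z) + f (t + 1 - w) z := by
    obtain ⟨w', rfl⟩ : ∃ w', w = w' + 1 := ⟨w - 1, (Nat.succ_pred_eq_of_pos hw).symm⟩
    rw [Finset.sum_range_succ]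
    simp only [Nat.add_sub_cancel]
    congr 2
    omega
  rw [h1, h2]
  ring
end favg
theorem stochastic_local_regret {n : ℕ}
    (f : ℕ → EuclideanSpace ℝ (Fin n) → ℝ) (T w : ℕ) (hw : 1 ≤ w) (hwT : w ≤ T)
    (M β σ : ℝ) (hβ : 0 < β)
    (hf0 : f 0 = fun _ => 0)
    (hdiff : ∀ t, Differentiable ℝ (f t))
    (hbdd : ∀ t x, |f t x| ≤ M)
    (hsmooth : ∀ t x y, ‖gradient (f t) x - gradient (f t) y‖ ≤ β * ‖x - y‖)
    {Ω : Type*} [MeasurableSpace Ω] (μ : Measure Ω) [IsProbabilityMeasure μ]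
    (x g : ℕ → Ω → EuclideanSpace ℝ (Fin n))
    (hx1 : ∀ ω, x 1 ω = 0)
    (hrec : ∀ t, 1 ≤ t → ∀ ω, x (t + 1) ω = x t ω - (1 / β) • g t ω)
    (hxmeas : ∀ t, Measurable (x t)) (hgmeas : ∀ t, Measurable (g t))
    (hgL2 : ∀ t, MemLp (g t) 2 μ)
    (hunbiased : ∀ t, 1 ≤ t → t ≤ T →
      μ[g t | MeasurableSpace.comap (x t) inferInstance] =ᵐ[μ]
        fun ω => gradient (Favg f w t) (x t ω))
    (hvar : ∀ t, 1 ≤ t → t ≤ T →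
      μ[(fun ω => ‖g t ω - gradient (Favg f w t) (x t ω)‖ ^ 2) |
          MeasurableSpace.comap (x t) inferInstance] ≤ᵐ[μ]
        fun _ => σ ^ 2 / w) :
    ∫ ω, (∑ t ∈ Finset.Icc 1 T, ‖gradient (Favg f w t) (x t ω)‖ ^ 2) ∂μ ≤
      (8 * β * M + σ ^ 2) * T / w := by
  classical
  set F : ℕ → EuclideanSpace ℝ (Fin n) → ℝ := Favg f w with hF
  have hM : 0 ≤ M := le_trans (abs_nonneg _) (hbdd 0 0)
  have hw0 : (0:ℝ) < w := by exact_mod_cast hw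
  have hβne : β ≠ 0 := hβ.ne'
  have hFd : ∀ t, Differentiable ℝ (F t) := fun t => Favg_diff f w t hdiff
  have hFsm : ∀ t a b, ‖gradient (F t) a - gradient (F t) b‖ ≤ β * ‖a - b‖ :=
    fun t => Favg_smooth f w t hw β hdiff hsmooth
  have hFb : ∀ t z, |F t z| ≤ M := fun t z => Favg_bdd f w t hw M hbdd z
  -- pointwise key inequality
  have key : ∀ t, 1 ≤ t → ∀ ω,
      ‖gradient (F t) (x t ω)‖ ^ 2
        ≤ 2 * β * (F t (x t ω) - F t (x (t+1) ω))
          + ‖g t ω - gradient (F t) (x t ω)‖ ^ 2 := by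
    intro t ht ω
    have hdes := descent_lemma (F t) β (hFd t) (hFsm t) (x t ω) (x (t+1) ω)
    have h1 : x (t+1) ω - x t ω = -((1/β) • g t ω) := by
      rw [hrec t ht ω]; abel
    rw [h1, inner_neg_right, real_inner_smul_right, norm_neg, norm_smul,
      Real.norm_eq_abs, abs_of_pos (by positivity : (0:ℝ) < 1/β), mul_pow] at hdes
    have h := mul_le_mul_of_nonneg_left hdes hβ.le
    have hexp : β * (F t (x t ω) + -(1 / β * ⟪gradient (F t) (x t ω), g t ω⟫)
        + β / 2 * ((1 / β) ^ 2 * ‖g t ω‖ ^ 2))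
        = β * F t (x t ω) - ⟪gradient (F t) (x t ω), g t ω⟫ + ‖g t ω‖ ^ 2 / 2 := by
      field_simp
      ring
    rw [hexp] at h
    rw [norm_sub_sq_real]
    have hc := real_inner_comm (g t ω) (gradient (F t) (x t ω))
    linarith
  -- telescoping bound
  have tel : ∀ ω, ∑ t ∈ Finset.Icc 1 T, (F t (x t ω) - F t (x (t+1) ω))
      ≤ 2 * M + T * (2 * M / w) := by
    intro ω
    have split : ∀ t ∈ Finset.Icc 1 T, F t (x t ω) - F t (x (t+1) ω)
        = (F t (x t ω) - F (t+1) (x (t+1) ω))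
          + (F (t+1) (x (t+1) ω) - F t (x (t+1) ω)) := fun t _ => by ring
    rw [Finset.sum_congr rfl split, Finset.sum_add_distrib]
    have t1 : ∀ N : ℕ, ∑ t ∈ Finset.Icc 1 N, (F t (x t ω) - F (t+1) (x (t+1) ω))
        = F 1 (x 1 ω) - F (N+1) (x (N+1) ω) := by
      intro N
      induction N with
      | zero => simp
      | succ k ih =>
        rw [Finset.sum_Icc_succ_top (by omega : 1 ≤ k + 1), ih]
        ring
    have t2 : ∑ t ∈ Finset.Icc 1 T, (F (t+1) (x (t+1) ω) - F t (x (t+1) ω))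
        ≤ ∑ _t ∈ Finset.Icc 1 T, (2 * M / w) := by
      apply Finset.sum_le_sum
      intro t ht
      have ht1 : 1 ≤ t := (Finset.mem_Icc.1 ht).1
      have := Favg_succ_sub f w t hw ht1 (x (t+1) ω)
      rw [← hF] at this
      rw [this]
      have hb1 := abs_le.1 (hbdd (t+1) (x (t+1) ω))
      have hb2 := abs_le.1 (hbdd (t+1-w) (x (t+1) ω))
      calc (1 / (w:ℝ)) * (f (t+1) (x (t+1) ω) - f (t+1-w) (x (t+1) ω))
          ≤ (1 / (w:ℝ)) * (2 * M) := by
            apply mul_le_mul_of_nonneg_left _ (by positivity)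
            linarith [hb1.2, hb2.1]
        _ = 2 * M / w := by ring
    rw [t1 T]
    have hs : ∑ _t ∈ Finset.Icc 1 T, (2 * M / w) = T * (2 * M / w) := by
      rw [Finset.sum_const, Nat.card_Icc, Nat.add_sub_cancel, nsmul_eq_mul]
    rw [hs] at t2
    have b1 := abs_le.1 (hFb 1 (x 1 ω))
    have b2 := abs_le.1 (hFb (T+1) (x (T+1) ω))
    linarith [b1.2, b2.1]
  -- pointwise combined bound
  have ptwise : ∀ ω, ∑ t ∈ Finset.Icc 1 T, ‖gradient (F t) (x t ω)‖ ^ 2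
      ≤ (4 * β * M + 4 * β * M * T / w)
        + ∑ t ∈ Finset.Icc 1 T, ‖g t ω - gradient (F t) (x t ω)‖ ^ 2 := by
    intro ω
    have h1 : ∑ t ∈ Finset.Icc 1 T, ‖gradient (F t) (x t ω)‖ ^ 2
        ≤ ∑ t ∈ Finset.Icc 1 T, (2 * β * (F t (x t ω) - F t (x (t+1) ω))
            + ‖g t ω - gradient (F t) (x t ω)‖ ^ 2) :=
      Finset.sum_le_sum fun t ht => key t (Finset.mem_Icc.1 ht).1 ω
    rw [Finset.sum_add_distrib, ← Finset.mul_sum] at h1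
    have h2 := mul_le_mul_of_nonneg_left (tel ω) (by positivity : (0:ℝ) ≤ 2 * β)
    have h3 : 2 * β * (2 * M + (T:ℝ) * (2 * M / w)) = 4 * β * M + 4 * β * M * T / w := by
      ring
    linarith
  -- integrability
  have memX : ∀ t, 1 ≤ t → MemLp (x t) 2 μ := by
    intro t ht
    induction t with
    | zero => omega
    | succ k ih =>
      rcases Nat.eq_or_lt_of_le ht with h | h
      · have hx : x 1 = fun _ => (0 : EuclideanSpace ℝ (Fin n)) := funext hx1
        rw [← h, hx]
        exact memLp_const _
      · have hk : 1 ≤ k := by omega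
        have hx : x (k+1) = fun ω => x k ω - (1/β) • g k ω := funext (hrec k hk)
        rw [hx]
        exact (ih hk).sub ((hgL2 k).const_smul (1/β) : MemLp (fun ω => (1/β) • g k ω) 2 μ)
  have hgradcont : ∀ t, Continuous (fun z => gradient (F t) z) := by
    intro t
    have : LipschitzWith β.toNNReal (gradient (F t)) := by
      apply LipschitzWith.of_dist_le_mul
      intro a b
      rw [dist_eq_norm, dist_eq_norm, Real.coe_toNNReal β hβ.le]
      exact hFsm t a b
    exact this.continuous
  have memGrad : ∀ t, 1 ≤ t → MemLp (fun ω => gradient (F t) (x t ω)) 2 μ := by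
    intro t ht
    have hmeas : AEStronglyMeasurable (fun ω => gradient (F t) (x t ω)) μ :=
      ((hgradcont t).measurable.comp (hxmeas t)).aestronglyMeasurable
    have hb : MemLp (fun ω => β * ‖x t ω‖ + ‖gradient (F t) 0‖) 2 μ :=
      (((memX t ht).norm).const_mul β).add (memLp_const _)
    refine MemLp.of_le hb hmeas (Filter.Eventually.of_forall fun ω => ?_)
    have hsm := hFsm t (x t ω) 0
    rw [sub_zero] at hsm
    have h1 : ‖gradient (F t) (x t ω)‖
        ≤ ‖gradient (F t) (x t ω) - gradient (F t) 0‖ + ‖gradient (F t) 0‖ := by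
      have := norm_add_le (gradient (F t) (x t ω) - gradient (F t) 0) (gradient (F t) 0)
      simpa using this
    have h2 : β * ‖x t ω‖ + ‖gradient (F t) 0‖
        ≤ ‖β * ‖x t ω‖ + ‖gradient (F t) 0‖‖ := le_abs_self _
    calc ‖gradient (F t) (x t ω)‖ ≤ β * ‖x t ω‖ + ‖gradient (F t) 0‖ := by linarith
      _ ≤ _ := h2
  have memDiff : ∀ t, 1 ≤ t → MemLp (fun ω => g t ω - gradient (F t) (x t ω)) 2 μ :=
    fun t ht => (hgL2 t).sub (memGrad t ht)
  have int_h : ∀ t, 1 ≤ t →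
      Integrable (fun ω => ‖g t ω - gradient (F t) (x t ω)‖ ^ 2) μ := fun t ht =>
    (memLp_two_iff_integrable_sq_norm (memDiff t ht).aestronglyMeasurable).1 (memDiff t ht)
  have int_q : ∀ t, 1 ≤ t →
      Integrable (fun ω => ‖gradient (F t) (x t ω)‖ ^ 2) μ := fun t ht =>
    (memLp_two_iff_integrable_sq_norm (memGrad t ht).aestronglyMeasurable).1 (memGrad t ht)
  have int_h_le : ∀ t, 1 ≤ t → t ≤ T →
      ∫ ω, ‖g t ω - gradient (F t) (x t ω)‖ ^ 2 ∂μ ≤ σ ^ 2 / w := by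
    intro t ht1 ht2
    have hm : MeasurableSpace.comap (x t) inferInstance ≤ _ := (hxmeas t).comap_le
    rw [← integral_condExp hm]
    calc ∫ ω, (μ[(fun ω => ‖g t ω - gradient (F t) (x t ω)‖ ^ 2) |
          MeasurableSpace.comap (x t) inferInstance]) ω ∂μ
        ≤ ∫ _ω, (σ ^ 2 / (w:ℝ)) ∂μ :=
          integral_mono_ae integrable_condExp (integrable_const _) (hvar t ht1 ht2)
      _ = σ ^ 2 / w := by simp
  -- conclude
  have int_sum_h : Integrable
      (fun ω => ∑ t ∈ Finset.Icc 1 T, ‖g t ω - gradient (F t) (x t ω)‖ ^ 2) μ :=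
    integrable_finset_sum _ fun t ht => int_h t (Finset.mem_Icc.1 ht).1
  calc ∫ ω, (∑ t ∈ Finset.Icc 1 T, ‖gradient (F t) (x t ω)‖ ^ 2) ∂μ
      ≤ ∫ ω, ((4 * β * M + 4 * β * M * T / w)
          + ∑ t ∈ Finset.Icc 1 T, ‖g t ω - gradient (F t) (x t ω)‖ ^ 2) ∂μ := by
        apply integral_mono
          (integrable_finset_sum _ fun t ht => int_q t (Finset.mem_Icc.1 ht).1)
          ((integrable_const _).add int_sum_h)
        exact ptwise
    _ = (4 * β * M + 4 * β * M * T / w)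
          + ∑ t ∈ Finset.Icc 1 T, ∫ ω, ‖g t ω - gradient (F t) (x t ω)‖ ^ 2 ∂μ := by
        rw [integral_add (integrable_const _) int_sum_h, integral_const,
          integral_finset_sum _ fun t ht => int_h t (Finset.mem_Icc.1 ht).1]
        simp
    _ ≤ (4 * β * M + 4 * β * M * T / w) + ∑ _t ∈ Finset.Icc 1 T, (σ ^ 2 / (w:ℝ)) := by
        apply add_le_add_right
        exact Finset.sum_le_sum fun t ht =>
          int_h_le t (Finset.mem_Icc.1 ht).1 (Finset.mem_Icc.1 ht).2
    _ = (4 * β * M + 4 * β * M * T / w) + T * (σ ^ 2 / w) := by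
        rw [Finset.sum_const, Nat.card_Icc, Nat.add_sub_cancel, nsmul_eq_mul]
    _ ≤ (8 * β * M + σ ^ 2) * T / w := by
        have hwT' : (w:ℝ) ≤ T := by exact_mod_cast hwT
        have h1 : 4 * β * M ≤ 4 * β * M * T / w := by
          rw [mul_div_assoc]
          nth_rewrite 1 [← mul_one (4 * β * M)]
          exact mul_le_mul_of_nonneg_left ((one_le_div hw0).2 hwT') (by positivity)
        have h2 : (8 * β * M + σ ^ 2) * T / w
            = 4 * β * M * T / w + 4 * β * M * T / w + T * (σ ^ 2 / w) := by ring
        linarith
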